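/- For a finite-horizon POMDP with final-stage reward, the belief-state dynamic programming recursion is correct: defining W_T(b) = max_{x_T} Σ_{y_T,z_T} b(z_T) p(y_T|z_T) V_T(x_T,y_T,z_T), the (unnormalized) belief update β_{t+1}(z_{t+1}|x_t,y_t,b_t) = Σ_{z_t} b_t(z_t) p(y_t|z_t) p(z_{t+1}|z_t,x_t), and W_t(b_t) = max_{x_t} Σ_{y_t} W_{t+1}(β_{t+1}(·|x_t,y_t,b_t)), the maximal expected final reward over all observation-dependent decision trees x_t(y_{1:t-1}) equals max_{x_1} Σ_{y_1} W_2(β_2(·|x_1,y_1)) where β_2(z_2|x_1,y_1) = Σ_{z_1} p(z_1) p(y_1|z_1) p(z_2|z_1,x_1). -/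

import Mathlib

open Finset

/-- The prefix of a trajectory of length `T`. -/
def pre {T : ℕ} {α : Type*} (t : Fin T) (f : Fin T → α) : Fin t → α :=
  fun i => f ⟨i.1, i.isLt.trans t.isLt⟩

/-- Joint probability of the observation/state trajectory `(y, z)` under a
decision tree `π` (the action at stage `t` is a function of `y_{1:t-1}`):
`Π_t p(y_t|z_t) p(z_t|z_{t-1}, x_{t-1}(y_{1:t-2}))`. -/
def pomdpTrajProb {X Y Z : Type*} [Fintype X] [Fintype Y] [Fintype Z]
    (T : ℕ) (p1 : Z → ℝ) (pt : Z → X → Z → ℝ) (po : Z → Y → ℝ)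
    (π : (t : Fin T) → (Fin t → Y) → X) (y : Fin T → Y) (z : Fin T → Z) : ℝ :=
  ∏ t : Fin T,
    po (z t) (y t) *
      (if h : t.1 = 0 then p1 (z t)
       else
         pt (z ⟨t.1 - 1, lt_of_le_of_lt (Nat.sub_le _ _) t.isLt⟩)
           (π ⟨t.1 - 1, lt_of_le_of_lt (Nat.sub_le _ _) t.isLt⟩
             (pre ⟨t.1 - 1, lt_of_le_of_lt (Nat.sub_le _ _) t.isLt⟩ y))
           (z t))

/-- Expected final reward `E[V_T(x_T, y_T, z_T)]` of a decision tree. -/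
def pomdpValue {X Y Z : Type*} [Fintype X] [Fintype Y] [Fintype Z]
    (T : ℕ) (hT : 0 < T) (p1 : Z → ℝ) (pt : Z → X → Z → ℝ) (po : Z → Y → ℝ)
    (VT : X → Y → Z → ℝ) (π : (t : Fin T) → (Fin t → Y) → X) : ℝ :=
  ∑ y : Fin T → Y, ∑ z : Fin T → Z,
    VT (π ⟨T - 1, Nat.sub_lt hT one_pos⟩ (pre ⟨T - 1, Nat.sub_lt hT one_pos⟩ y))
        (y ⟨T - 1, Nat.sub_lt hT one_pos⟩) (z ⟨T - 1, Nat.sub_lt hT one_pos⟩) *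
      pomdpTrajProb T p1 pt po π y z

/-- The unnormalized belief update
`β(z'|x, y, b) = Σ_z b(z) p(y|z) p(z'|z,x)`. -/
def beliefUpdate {X Y Z : Type*} [Fintype Z] (pt : Z → X → Z → ℝ)
    (po : Z → Y → ℝ) (x : X) (y : Y) (b : Z → ℝ) : Z → ℝ :=
  fun z' => ∑ z : Z, b z * po z y * pt z x z'

section Aux
variable {X Y Z : Type*} [Fintype X] [Fintype Y] [Fintype Z]
  [Nonempty X] [Nonempty Y] [Nonempty Z]
  [DecidableEq X] [DecidableEq Y] [DecidableEq Z]

lemma sum_pi_succ {n : ℕ} {α M : Type*} [Fintype α] [AddCommMonoid M]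
    (g : (Fin (n+1) → α) → M) :
    ∑ f : Fin (n+1) → α, g f = ∑ a : α, ∑ f' : Fin n → α, g (Fin.cons a f') := by
  rw [← Equiv.sum_comp (Fin.consEquiv fun _ => α) g, Fintype.sum_prod_type]; rfl

lemma fin0_eq (f g : Fin 0 → Y) : f = g := funext fun i => i.elim0

def tailPolicy (k : ℕ) (π : (t : Fin (k+2)) → (Fin t → Y) → X) (y0 : Y) :
    (t : Fin (k+1)) → (Fin t → Y) → X :=
  fun t h => π ⟨t.1+1, Nat.succ_lt_succ t.isLt⟩ (Fin.cons y0 h)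

def consPolicy (k : ℕ) (x : X) (F : Y → (t : Fin (k+1)) → (Fin t → Y) → X) :
    (t : Fin (k+2)) → (Fin t → Y) → X :=
  fun t h =>
    if h0 : t.1 = 0 then x
    else F (h ⟨0, Nat.pos_of_ne_zero h0⟩)
      ⟨t.1 - 1, by have := t.isLt; omega⟩
      (fun i => h ⟨i.1+1, by have h1 : i.1 < t.1 - 1 := i.isLt; omega⟩)

lemma consPolicy_zero (k : ℕ) (x : X) (F : Y → (t : Fin (k+1)) → (Fin t → Y) → X)
    (h0 : (0:ℕ) < k+2) (h : Fin 0 → Y) :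
    consPolicy k x F ⟨0, h0⟩ h = x := by
  simp [consPolicy]

lemma tail_consPolicy (k : ℕ) (x : X) (F : Y → (t : Fin (k+1)) → (Fin t → Y) → X)
    (y0 : Y) : tailPolicy k (consPolicy k x F) y0 = F y0 := by
  funext t h
  simp only [tailPolicy, consPolicy, Fin.cons_zero]
  rw [dif_neg (Nat.succ_ne_zero _)]
  congr 1

lemma pre_cons {n : ℕ} (j : ℕ) (hj : j+1 < n+1) (hj' : j < n) (y0 : Y)
    (y' : Fin n → Y) :
    pre (⟨j+1, hj⟩ : Fin (n+1)) (Fin.cons y0 y') = Fin.cons y0 (pre (⟨j, hj'⟩ : Fin n) y') := by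
  funext i
  rcases i with ⟨iv, ivlt⟩
  cases iv with
  | zero => rfl
  | succ m => rfl
end Aux

section Main
set_option linter.unusedSectionVars false
variable {X Y Z : Type*} [Fintype X] [Fintype Y] [Fintype Z]
  [Nonempty X] [Nonempty Y] [Nonempty Z]
  [DecidableEq X] [DecidableEq Y] [DecidableEq Z]
  (pt : Z → X → Z → ℝ) (po : Z → Y → ℝ) (VT : X → Y → Z → ℝ)

lemma traj_factor (m : ℕ) (p1 : Z → ℝ) (π : (t : Fin (m+1)) → (Fin t → Y) → X)
    (y : Fin (m+1) → Y) (z : Fin (m+1) → Z) :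
    pomdpTrajProb (m+1) p1 pt po π y z
      = p1 (z 0) * pomdpTrajProb (m+1) (fun _ => (1:ℝ)) pt po π y z := by
  unfold pomdpTrajProb
  rw [Fin.prod_univ_succ, Fin.prod_univ_succ]
  simp only [Fin.val_succ, Fin.val_zero, dif_pos rfl, dite_true, dif_neg (Nat.succ_ne_zero _), ↓reduceDIte]
  ring

lemma traj_cons (k : ℕ) (b : Z → ℝ) (π : (t : Fin (k+2)) → (Fin t → Y) → X)
    (y0 : Y) (y' : Fin (k+1) → Y) (z0 : Z) (z' : Fin (k+1) → Z) :
    pomdpTrajProb (k+2) b pt po π (Fin.cons y0 y') (Fin.cons z0 z')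
      = po z0 y0 * b z0 *
        pomdpTrajProb (k+1) (fun z'' => pt z0 (π ⟨0, by omega⟩ (fun i => i.elim0)) z'')
          pt po (tailPolicy k π y0) y' z' := by
  unfold pomdpTrajProb
  rw [Fin.prod_univ_succ]
  simp only [Fin.cons_zero, Fin.val_zero, dif_pos rfl, dite_true]
  congr 1
  apply Finset.prod_congr rfl
  intro t _
  rcases t with ⟨tv, tlt⟩
  have hzs : (Fin.cons z0 z' : Fin (k+2) → Z) (Fin.succ ⟨tv, tlt⟩) = z' ⟨tv, tlt⟩ :=
    Fin.cons_succ _ _ _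
  have hys : (Fin.cons y0 y' : Fin (k+2) → Y) (Fin.succ ⟨tv, tlt⟩) = y' ⟨tv, tlt⟩ :=
    Fin.cons_succ _ _ _
  rw [hzs, hys]
  congr 1
  rw [dif_neg (by simp [Fin.val_succ] : ¬ (Fin.succ (⟨tv, tlt⟩ : Fin (k+1))).1 = 0)]
  cases tv with
  | zero =>
    rw [dif_pos rfl]
    exact congrArg (fun g => pt z0 (π ⟨0, by omega⟩ g) (z' ⟨0, tlt⟩)) (fin0_eq _ _)
  | succ j =>
    rw [dif_neg (Nat.succ_ne_zero j)]
    have hj2 : j + 1 < k + 2 := by omega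
    have hj1 : j < k + 1 := by omega
    exact congrArg (fun g => pt (z' ⟨j, hj1⟩) (π ⟨j+1, hj2⟩ g) (z' ⟨j+1, tlt⟩))
      (pre_cons j hj2 hj1 y0 y')

lemma sum_pi_one {α M : Type*} [Fintype α] [AddCommMonoid M] (g : (Fin 1 → α) → M) :
    ∑ f : Fin 1 → α, g f = ∑ a : α, g (fun _ => a) := by
  rw [← Equiv.sum_comp (Equiv.funUnique (Fin 1) α).symm g]; rfl

lemma value_one (b : Z → ℝ) (π : (t : Fin 1) → (Fin t → Y) → X) :
    pomdpValue 1 one_pos b pt po VT π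
      = ∑ y0 : Y, ∑ z0 : Z, b z0 * po z0 y0 * VT (π ⟨0, one_pos⟩ (fun i => i.elim0)) y0 z0 := by
  unfold pomdpValue pomdpTrajProb
  rw [sum_pi_one]
  refine Finset.sum_congr rfl fun a _ => ?_
  rw [sum_pi_one]
  refine Finset.sum_congr rfl fun c _ => ?_
  rw [Fin.prod_univ_one]
  show VT (π ⟨0, one_pos⟩ (pre ⟨0, one_pos⟩ (fun _ => a))) a c * (po c a * b c)
      = b c * po c a * VT (π ⟨0, one_pos⟩ (fun i => i.elim0)) a c
  rw [show π ⟨0, one_pos⟩ (pre ⟨0, one_pos⟩ (fun _ => a)) = π ⟨0, one_pos⟩ (fun i => i.elim0)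
    from congrArg _ (fin0_eq _ _)]
  ring

lemma value_cons (k : ℕ) (b : Z → ℝ) (π : (t : Fin (k+2)) → (Fin t → Y) → X) :
    pomdpValue (k+2) (Nat.succ_pos _) b pt po VT π
      = ∑ y0 : Y,
          pomdpValue (k+1) (Nat.succ_pos _)
            (beliefUpdate pt po (π ⟨0, by omega⟩ (fun i => i.elim0)) y0 b)
            pt po VT (tailPolicy k π y0) := by
  unfold pomdpValue
  rw [sum_pi_succ]
  apply Finset.sum_congr rfl
  intro y0 _
  apply Finset.sum_congr rfl
  intro y' _
  rw [sum_pi_succ, Finset.sum_comm]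
  apply Finset.sum_congr rfl
  intro z' _
  have hVT : ∀ z0 : Z,
      VT (π ⟨k+1, by omega⟩ (pre ⟨k+1, by omega⟩ (Fin.cons y0 y')))
          ((Fin.cons y0 y' : Fin (k+2) → Y) ⟨k+1, by omega⟩)
          ((Fin.cons z0 z' : Fin (k+2) → Z) ⟨k+1, by omega⟩)
        = VT (tailPolicy k π y0 ⟨k, by omega⟩ (pre ⟨k, by omega⟩ y'))
            (y' ⟨k, by omega⟩) (z' ⟨k, by omega⟩) := by
    intro z0
    exact congrArg (fun g => VT (π ⟨k+1, by omega⟩ g) (y' ⟨k, by omega⟩) (z' ⟨k, by omega⟩))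
      (pre_cons k (by omega) (by omega) y0 y')
  calc ∑ z0 : Z,
        VT (π ⟨k+2-1, _⟩ (pre ⟨k+2-1, _⟩ (Fin.cons y0 y')))
          ((Fin.cons y0 y' : Fin (k+2) → Y) ⟨k+2-1, _⟩)
          ((Fin.cons z0 z' : Fin (k+2) → Z) ⟨k+2-1, _⟩) *
          pomdpTrajProb (k+2) b pt po π (Fin.cons y0 y') (Fin.cons z0 z')
      = ∑ z0 : Z,
          VT (tailPolicy k π y0 ⟨k, by omega⟩ (pre ⟨k, by omega⟩ y'))
            (y' ⟨k, by omega⟩) (z' ⟨k, by omega⟩) *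
          (po z0 y0 * b z0 *
            (pt z0 (π ⟨0, by omega⟩ (fun i => i.elim0)) (z' 0) *
              pomdpTrajProb (k+1) (fun _ => (1:ℝ)) pt po (tailPolicy k π y0) y' z')) := by
        apply Finset.sum_congr rfl
        intro z0 _
        rw [traj_cons, traj_factor]
        exact congrArg₂ (· * ·) (hVT z0) rfl
    _ = VT (tailPolicy k π y0 ⟨k, by omega⟩ (pre ⟨k, by omega⟩ y'))
            (y' ⟨k, by omega⟩) (z' ⟨k, by omega⟩) *
          pomdpTrajProb (k+1)
            (beliefUpdate pt po (π ⟨0, by omega⟩ (fun i => i.elim0)) y0 b)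
            pt po (tailPolicy k π y0) y' z' := by
        rw [traj_factor pt po k
          (beliefUpdate pt po (π ⟨0, by omega⟩ (fun i => i.elim0)) y0 b)
          (tailPolicy k π y0) y' z']
        rw [show (beliefUpdate pt po (π ⟨0, by omega⟩ (fun i => i.elim0)) y0 b) (z' 0)
            = ∑ z0 : Z, b z0 * po z0 y0 * pt z0 (π ⟨0, by omega⟩ (fun i => i.elim0)) (z' 0)
          from rfl]
        rw [Finset.sum_mul, Finset.mul_sum]
        exact Finset.sum_congr rfl fun z0 _ => by ring

lemma sum_sup' {ι β : Type*} [Fintype ι] [DecidableEq ι] [Fintype β] [Nonempty β]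
    (g : ι → β → ℝ) :
    ∑ i : ι, univ.sup' univ_nonempty (g i)
      = univ.sup' univ_nonempty (fun f : ι → β => ∑ i, g i (f i)) := by
  apply le_antisymm
  · choose f hf using fun i => Finset.exists_mem_eq_sup' (univ_nonempty) (g i)
    calc ∑ i : ι, univ.sup' univ_nonempty (g i) = ∑ i, g i (f i) :=
          Finset.sum_congr rfl fun i _ => (hf i).2
      _ ≤ _ := Finset.le_sup' (fun f : ι → β => ∑ i, g i (f i)) (mem_univ f)
  · apply Finset.sup'_le
    intro f _
    exact Finset.sum_le_sum fun i _ => Finset.le_sup' (g i) (mem_univ (f i))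

noncomputable def Ufun : ℕ → (Z → ℝ) → ℝ
  | 0, b => univ.sup' univ_nonempty
      (fun x : X => ∑ y : Y, ∑ z : Z, b z * po z y * VT x y z)
  | (k+1), b => univ.sup' univ_nonempty
      (fun x : X => ∑ y : Y, Ufun k (beliefUpdate pt po x y b))

lemma Ufun_zero (b : Z → ℝ) : Ufun pt po VT 0 b
    = univ.sup' univ_nonempty
      (fun x : X => ∑ y : Y, ∑ z : Z, b z * po z y * VT x y z) := by
  rw [Ufun]

lemma Ufun_succ (k : ℕ) (b : Z → ℝ) : Ufun pt po VT (k+1) b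
    = univ.sup' univ_nonempty
      (fun x : X => ∑ y : Y, Ufun pt po VT k (beliefUpdate pt po x y b)) := by
  rw [Ufun]

set_option maxHeartbeats 2000000 in
lemma sup_value_eq_U : ∀ (k : ℕ) (b : Z → ℝ),
    univ.sup' univ_nonempty
      (fun π : (t : Fin (k+1)) → (Fin t → Y) → X =>
        pomdpValue (k+1) (Nat.succ_pos k) b pt po VT π)
      = Ufun pt po VT k b := by
  intro k
  induction k with
  | zero =>
    intro b
    rw [Ufun_zero]
    apply le_antisymm
    · apply Finset.sup'_le
      intro π _
      rw [value_one]
      exact Finset.le_sup'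
        (fun x : X => ∑ y : Y, ∑ z : Z, b z * po z y * VT x y z) (mem_univ _)
    · apply Finset.sup'_le
      intro x _
      have h := (value_one pt po VT b (fun _ _ => x)).symm
      calc ∑ y : Y, ∑ z : Z, b z * po z y * VT x y z
          = pomdpValue 1 one_pos b pt po VT (fun _ _ => x) := h
        _ ≤ _ := Finset.le_sup' _ (mem_univ _)
  | succ k ih =>
    intro b
    rw [Ufun_succ]
    apply le_antisymm
    · apply Finset.sup'_le
      intro π _
      rw [value_cons]
      calc ∑ y0 : Y, pomdpValue (k+1) (Nat.succ_pos _)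
            (beliefUpdate pt po (π ⟨0, by omega⟩ (fun i => i.elim0)) y0 b) pt po VT
            (tailPolicy k π y0)
          ≤ ∑ y0 : Y, Ufun pt po VT k
              (beliefUpdate pt po (π ⟨0, by omega⟩ (fun i => i.elim0)) y0 b) := by
            apply Finset.sum_le_sum
            intro y0 _
            rw [← ih]
            exact Finset.le_sup' _ (mem_univ _)
        _ ≤ _ :=
            Finset.le_sup'
              (fun x : X => ∑ y : Y, Ufun pt po VT k (beliefUpdate pt po x y b))
              (mem_univ _)
    · apply Finset.sup'_le
      intro x _
      have hrw : ∀ y0 : Y, Ufun pt po VT k (beliefUpdate pt po x y0 b)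
          = univ.sup' univ_nonempty
            (fun π' : (t : Fin (k+1)) → (Fin t → Y) → X =>
              pomdpValue (k+1) (Nat.succ_pos k) (beliefUpdate pt po x y0 b) pt po VT π') :=
        fun y0 => (ih _).symm
      rw [Finset.sum_congr rfl (fun y0 _ => hrw y0), sum_sup']
      apply Finset.sup'_le
      intro F _
      have hval : pomdpValue (k+2) (Nat.succ_pos _) b pt po VT (consPolicy k x F)
          = ∑ y0 : Y, pomdpValue (k+1) (Nat.succ_pos k)
              (beliefUpdate pt po x y0 b) pt po VT (F y0) := by
        rw [value_cons]
        apply Finset.sum_congr rfl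
        intro y0 _
        rw [consPolicy_zero, tail_consPolicy]
      rw [← hval]
      exact Finset.le_sup' _ (mem_univ _)

end Main

/-- Correctness of the belief-state dynamic programming
recursion for the finite-horizon POMDP with final-stage reward. -/
theorem pomdp_belief_dynamic_programming {X Y Z : Type*}
    [Fintype X] [Fintype Y] [Fintype Z] [Nonempty X] [Nonempty Y] [Nonempty Z]
    [DecidableEq X] [DecidableEq Y] [DecidableEq Z]
    (T : ℕ) (hT : 2 ≤ T)
    (p1 : Z → ℝ) (pt : Z → X → Z → ℝ) (po : Z → Y → ℝ) (VT : X → Y → Z → ℝ)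
    (hp1 : ∀ z, 0 ≤ p1 z) (hp1sum : ∑ z, p1 z = 1)
    (hpt : ∀ z x z', 0 ≤ pt z x z') (hptsum : ∀ z x, ∑ z', pt z x z' = 1)
    (hpo : ∀ z y, 0 ≤ po z y) (hposum : ∀ z, ∑ y, po z y = 1)
    (W : ℕ → (Z → ℝ) → ℝ)
    (hWT : ∀ b : Z → ℝ, W T b = univ.sup' univ_nonempty
      (fun x : X => ∑ y : Y, ∑ z : Z, b z * po z y * VT x y z))
    (hWrec : ∀ t, 2 ≤ t → t < T → ∀ b : Z → ℝ,
      W t b = univ.sup' univ_nonempty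
        (fun x : X => ∑ y : Y, W (t + 1) (beliefUpdate pt po x y b))) :
    univ.sup' univ_nonempty
        (fun π : (t : Fin T) → (Fin t → Y) → X =>
          pomdpValue T (lt_of_lt_of_le two_pos hT) p1 pt po VT π)
      = univ.sup' univ_nonempty
          (fun x1 : X => ∑ y1 : Y, W 2 (beliefUpdate pt po x1 y1 p1)) := by
  obtain ⟨K, rfl⟩ : ∃ K, T = K + 2 := ⟨T - 2, by omega⟩
  have WU : ∀ j, j ≤ K → ∀ b : Z → ℝ, Ufun pt po VT j b = W (K + 2 - j) b := by
    intro j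
    induction j with
    | zero =>
      intro _ b
      rw [Ufun_zero]
      exact (hWT b).symm
    | succ j ihj =>
      intro hj b
      have h2 : 2 ≤ K + 2 - (j+1) := by omega
      have h3 : K + 2 - (j+1) < K + 2 := by omega
      rw [Ufun_succ, hWrec _ h2 h3 b,
        show K + 2 - (j+1) + 1 = K + 2 - j from by omega]
      refine Finset.sup'_congr _ rfl fun x _ => ?_
      exact Finset.sum_congr rfl fun y _ => ihj (by omega) _
  have hmain := sup_value_eq_U pt po VT (K+1) p1
  calc univ.sup' univ_nonempty (fun π : (t : Fin (K+2)) → (Fin t → Y) → X =>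
        pomdpValue (K+2) (lt_of_lt_of_le two_pos hT) p1 pt po VT π)
      = Ufun pt po VT (K+1) p1 := hmain
    _ = univ.sup' univ_nonempty
          (fun x1 : X => ∑ y1 : Y, W 2 (beliefUpdate pt po x1 y1 p1)) := by
        rw [Ufun_succ]
        refine Finset.sup'_congr _ rfl fun x _ => ?_
        refine Finset.sum_congr rfl fun y _ => ?_
        rw [WU K le_rfl, show K + 2 - K = 2 from by omega]
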